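/- The implicit Euler upwind scheme for pure advection with divergence-free discrete velocity satisfies a discrete maximum principle: if the cell concentrations at time step n satisfy 0 ≤ cᵢⁿ ≤ M for all cells i and all inflow boundary values are in [0, M], then the implicit update φᵢ|Ωᵢ|(cᵢ^{n+1} − cᵢⁿ)/Δt + Σ_j F_{ij}(c^{n+1}) = 0 with upwind fluxes F_{ij} has a unique solution with 0 ≤ cᵢ^{n+1} ≤ M for all i. -/
import Mathlib

open Finset

section Aux

variable {ι : Type*} [Fintype ι] [DecidableEq ι]

lemma mul_nonneg_of_nonpos_nonpos' {a b : ℝ} (ha : a ≤ 0) (hb : b ≤ 0) : 0 ≤ a * b := by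
  nlinarith

/-- System matrix of the implicit upwind scheme. -/
noncomputable def upwindA (φ Vol : ι → ℝ) (Δt : ℝ) (v : ι → ι → ℝ) (vb : ι → ℝ) :
    Matrix ι ι ℝ :=
  Matrix.of fun i j =>
    (if i = j then φ i * Vol i / Δt + (∑ k, max (v i k) 0) + max (vb i) 0 else 0)
      + min (v i j) 0

lemma upwindA_mulVec (φ Vol : ι → ℝ) (Δt : ℝ) (v : ι → ι → ℝ) (vb : ι → ℝ)
    (c : ι → ℝ) (i : ι) :
    (upwindA φ Vol Δt v vb).mulVec c i
      = (φ i * Vol i / Δt + (∑ k, max (v i k) 0) + max (vb i) 0) * c i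
        + ∑ j, min (v i j) 0 * c j := by
  unfold upwindA
  simp only [Matrix.mulVec, dotProduct, Matrix.of_apply]
  have h : ∀ j, ((if i = j then φ i * Vol i / Δt + (∑ k, max (v i k) 0) + max (vb i) 0 else 0)
        + min (v i j) 0) * c j
      = (if i = j then (φ i * Vol i / Δt + (∑ k, max (v i k) 0) + max (vb i) 0) * c j else 0)
        + min (v i j) 0 * c j := by
    intro j; by_cases hij : i = j <;> simp [hij] <;> ring
  rw [Finset.sum_congr rfl fun j _ => h j, Finset.sum_add_distrib, Finset.sum_ite_eq]
  simp

lemma upwind_scheme_iff (φ Vol : ι → ℝ) (Δt : ℝ) (v : ι → ι → ℝ) (vb cb cn : ι → ℝ)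
    (c : ι → ℝ) (i : ι) :
    (φ i * Vol i * (c i - cn i) / Δt
        + (∑ j, (max (v i j) 0 * c i + min (v i j) 0 * c j))
        + (max (vb i) 0 * c i + min (vb i) 0 * cb i) = 0)
      ↔ (upwindA φ Vol Δt v vb).mulVec c i
          = φ i * Vol i * cn i / Δt - min (vb i) 0 * cb i := by
  rw [upwindA_mulVec]
  have hsplit : (∑ j, (max (v i j) 0 * c i + min (v i j) 0 * c j))
      = (∑ j, max (v i j) 0) * c i + ∑ j, min (v i j) 0 * c j := by
    rw [Finset.sum_add_distrib, Finset.sum_mul]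
  rw [hsplit]
  constructor <;> intro h
  · linear_combination h
  · linear_combination h

/-- The negated concentrations satisfy the scheme with negated data. -/
lemma upwind_scheme_neg (φ Vol : ι → ℝ) (Δt : ℝ) (v : ι → ι → ℝ) (vb cb cn : ι → ℝ)
    (c : ι → ℝ)
    (hc : ∀ i, φ i * Vol i * (c i - cn i) / Δt
        + (∑ j, (max (v i j) 0 * c i + min (v i j) 0 * c j))
        + (max (vb i) 0 * c i + min (vb i) 0 * cb i) = 0) (i : ι) :
    φ i * Vol i * ((-c) i - (-cn i)) / Δt
        + (∑ j, (max (v i j) 0 * (-c) i + min (v i j) 0 * (-c) j))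
        + (max (vb i) 0 * (-c) i + min (vb i) 0 * (-cb i)) = 0 := by
  have h := hc i
  have hsum : (∑ j, (max (v i j) 0 * (-c) i + min (v i j) 0 * (-c) j))
      = -(∑ j, (max (v i j) 0 * c i + min (v i j) 0 * c j)) := by
    rw [← Finset.sum_neg_distrib]
    exact Finset.sum_congr rfl fun j _ => by simp; ring
  rw [hsum]
  simp only [Pi.neg_apply]
  linear_combination -h

/-- Upper bound (discrete maximum principle), one-sided. -/
lemma upwind_upper (φ Vol : ι → ℝ) (Δt U : ℝ) (v : ι → ι → ℝ) (vb cb cn c : ι → ℝ)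
    (hφ : ∀ i, 0 < φ i) (hVol : ∀ i, 0 < Vol i) (hΔt : 0 < Δt)
    (hdivfree : ∀ i, (∑ j, v i j) + vb i = 0)
    (hcb : ∀ i, cb i ≤ U) (hcn : ∀ i, cn i ≤ U)
    (hc : ∀ i, φ i * Vol i * (c i - cn i) / Δt
        + (∑ j, (max (v i j) 0 * c i + min (v i j) 0 * c j))
        + (max (vb i) 0 * c i + min (vb i) 0 * cb i) = 0) :
    ∀ i, c i ≤ U := by
  intro i₀
  obtain ⟨i, -, hmax⟩ := Finset.exists_max_image Finset.univ c ⟨i₀, Finset.mem_univ _⟩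
  have hmax' : ∀ j, c j ≤ c i := fun j => hmax j (Finset.mem_univ _)
  suffices h : c i ≤ U from le_trans (hmax' i₀) h
  have key : φ i * Vol i * (c i - cn i) / Δt
      + (∑ j, min (v i j) 0 * (c j - c i)) + min (vb i) 0 * (cb i - c i) = 0 := by
    have h1 := hc i
    have h2 := hdivfree i
    have hs : (∑ j, (max (v i j) 0 * c i + min (v i j) 0 * c j))
        = (∑ j, v i j) * c i + ∑ j, min (v i j) 0 * (c j - c i) := by
      rw [Finset.sum_mul, ← Finset.sum_add_distrib]
      refine Finset.sum_congr rfl fun j _ => ?_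
      have hmm := max_add_min (v i j) 0
      linear_combination c i * hmm
    have hbnd : max (vb i) 0 * c i + min (vb i) 0 * cb i
        = vb i * c i + min (vb i) 0 * (cb i - c i) := by
      have hmm := max_add_min (vb i) 0
      linear_combination c i * hmm
    rw [hs, hbnd] at h1
    linear_combination h1 - c i * h2
  have hS : 0 ≤ ∑ j, min (v i j) 0 * (c j - c i) :=
    Finset.sum_nonneg fun j _ =>
      mul_nonneg_of_nonpos_nonpos' (min_le_right _ _) (by linarith [hmax' j])
  by_cases hci : c i ≤ U
  · exact hci
  push_neg at hci
  have hT : 0 ≤ min (vb i) 0 * (cb i - c i) :=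
    mul_nonneg_of_nonpos_nonpos' (min_le_right _ _) (by linarith [hcb i])
  have hpos : 0 < φ i * Vol i := mul_pos (hφ i) (hVol i)
  have hle : φ i * Vol i * (c i - cn i) / Δt ≤ 0 := by linarith
  have hcle : c i - cn i ≤ 0 := by
    by_contra h'
    push_neg at h'
    have := div_pos (mul_pos hpos h') hΔt
    linarith
  linarith [hcn i]

end Aux

/-- Discrete maximum principle for the implicit Euler, first-order upwind
finite-volume scheme for pure advection with divergence-free discrete
velocity.  `ι` is the finite set of cells, with porosities `φ i > 0`, volumes
`Vol i > 0` and time step `Δt > 0`.  `v i j = −v j i` is the prescribed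
signed flux from cell `i` to cell `j` and `vb i` the signed flux through the
boundary face of cell `i` (positive for outflow); the discrete velocity is
divergence free including boundary faces: `Σ_j v i j + vb i = 0`.  The upwind
interface flux is `F_{ij}(c) = v_{ij}⁺ c_i + v_{ij}⁻ c_j`, and inflow
boundary faces use the prescribed boundary concentration `cb i ∈ [0, M]` as
the upstream value.  If `0 ≤ cᵢⁿ ≤ M` for all cells, then the implicit update
`φᵢ |Ωᵢ| (cᵢ^{n+1} − cᵢⁿ)/Δt + Σ_j F_{ij}(c^{n+1}) = 0` (with boundary flux
included) has a unique solution `c^{n+1}`, and it satisfies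
`0 ≤ cᵢ^{n+1} ≤ M` for all `i`. -/
theorem implicit_upwind_maximum_principle
    {ι : Type*} [Fintype ι] [DecidableEq ι]
    (φ Vol : ι → ℝ) (Δt M : ℝ) (v : ι → ι → ℝ) (vb cb cn : ι → ℝ)
    (hφ : ∀ i, 0 < φ i) (hVol : ∀ i, 0 < Vol i) (hΔt : 0 < Δt) (hM : 0 ≤ M)
    (hanti : ∀ i j, v i j = -v j i)
    (hdivfree : ∀ i, (∑ j, v i j) + vb i = 0)
    (hcb : ∀ i, 0 ≤ cb i ∧ cb i ≤ M)
    (hcn : ∀ i, 0 ≤ cn i ∧ cn i ≤ M) :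
    (∃! c : ι → ℝ, ∀ i,
        φ i * Vol i * (c i - cn i) / Δt
          + (∑ j, (max (v i j) 0 * c i + min (v i j) 0 * c j))
          + (max (vb i) 0 * c i + min (vb i) 0 * cb i) = 0) ∧
    (∀ c : ι → ℝ,
      (∀ i,
        φ i * Vol i * (c i - cn i) / Δt
          + (∑ j, (max (v i j) 0 * c i + min (v i j) 0 * c j))
          + (max (vb i) 0 * c i + min (vb i) 0 * cb i) = 0) →
      ∀ i, 0 ≤ c i ∧ c i ≤ M) := by
  classical
  set A := upwindA φ Vol Δt v vb with hA
  set b : ι → ℝ := fun i => φ i * Vol i * cn i / Δt - min (vb i) 0 * cb i with hb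
  have hker : ∀ d : ι → ℝ, A.mulVec d = 0 → d = 0 := by
    intro d hd
    have hscheme : ∀ i, φ i * Vol i * (d i - (fun _ => (0:ℝ)) i) / Δt
        + (∑ j, (max (v i j) 0 * d i + min (v i j) 0 * d j))
        + (max (vb i) 0 * d i + min (vb i) 0 * (fun _ => (0:ℝ)) i) = 0 := by
      intro i
      refine (upwind_scheme_iff φ Vol Δt v vb (fun _ => (0:ℝ)) (fun _ => (0:ℝ)) d i).mpr ?_
      have := congrFun hd i
      simpa using this
    have hle : ∀ i, d i ≤ 0 :=
      upwind_upper φ Vol Δt 0 v vb (fun _ => (0:ℝ)) (fun _ => (0:ℝ)) d hφ hVol hΔt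
        hdivfree (fun i => le_refl 0) (fun i => le_refl 0) hscheme
    have hneg := upwind_scheme_neg φ Vol Δt v vb (fun _ => (0:ℝ)) (fun _ => (0:ℝ)) d hscheme
    have hge : ∀ i, (-d) i ≤ 0 :=
      upwind_upper φ Vol Δt 0 v vb (fun i => -(fun _ => (0:ℝ)) i) (fun i => -(fun _ => (0:ℝ)) i)
        (-d) hφ hVol hΔt hdivfree (fun i => by simp) (fun i => by simp) hneg
    funext i
    have h1 := hle i
    have h2 := hge i
    simp only [Pi.neg_apply, neg_nonpos] at h2
    have : d i = 0 := le_antisymm h1 (by simpa using h2)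
    simpa using this
  have hinj : Function.Injective A.mulVec := by
    intro x y hxy
    have h0 : A.mulVec (x - y) = 0 := by
      rw [Matrix.mulVec_sub, hxy, sub_self]
    have := hker _ h0
    exact sub_eq_zero.mp this
  have hsurj : Function.Surjective A.mulVec := by
    have h1 : Function.Injective A.mulVecLin := by
      simpa only [Function.Injective, Matrix.mulVecLin_apply] using hinj
    have h2 := (LinearMap.injective_iff_surjective (f := A.mulVecLin)).mp h1
    intro y
    obtain ⟨x, hx⟩ := h2 y
    exact ⟨x, by simpa [Matrix.mulVecLin_apply] using hx⟩
  obtain ⟨c₀, hc₀⟩ := hsurj b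
  have hbound : ∀ c : ι → ℝ,
      (∀ i, φ i * Vol i * (c i - cn i) / Δt
          + (∑ j, (max (v i j) 0 * c i + min (v i j) 0 * c j))
          + (max (vb i) 0 * c i + min (vb i) 0 * cb i) = 0) →
      ∀ i, 0 ≤ c i ∧ c i ≤ M := by
    intro c hc i
    constructor
    · have hneg := upwind_scheme_neg φ Vol Δt v vb cb cn c hc
      have := upwind_upper φ Vol Δt 0 v vb (fun i => -cb i) (fun i => -cn i) (-c)
        hφ hVol hΔt hdivfree (fun i => by simpa using (hcb i).1)
        (fun i => by simpa using (hcn i).1) hneg i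
      simpa using this
    · exact upwind_upper φ Vol Δt M v vb cb cn c hφ hVol hΔt hdivfree
        (fun i => (hcb i).2) (fun i => (hcn i).2) hc i
  refine ⟨⟨c₀, ?_, ?_⟩, hbound⟩
  · intro i
    exact (upwind_scheme_iff φ Vol Δt v vb cb cn c₀ i).mpr (congrFun hc₀ i)
  · intro c' hc'
    apply hinj
    rw [hc₀]
    funext i
    exact (upwind_scheme_iff φ Vol Δt v vb cb cn c' i).mp (hc' i)
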